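/- Let 𝒯 = ∏_{n∈ℕ} [2^n] with the product topology (each factor discrete), and let μ be a Maharam submeasure on the Borel σ-algebra of 𝒯. Then for every Borel set A ⊆ 𝒯 × 𝒯 the map x ↦ μ(A_x) is Borel measurable, where A_x = {y ∈ 𝒯 : (x,y) ∈ A}. In particular, the set {x : μ(A_x) = 0} is Borel. -/

import Mathlib

open Filter Topology

/-- 𝒯 = ∏_{n∈ℕ} [2^n]  (the paper's index `n ∈ {1,2,…}` corresponds to the Lean
index `n ∈ {0,1,…}` via `n ↦ n+1`).  Each factor is a finite discrete space; the Borel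
σ-algebra of the product is the product σ-algebra used below. -/
abbrev TalSpace : Type := (n : ℕ) → Fin (2 ^ (n + 1))

namespace Statement4Aux

/-- The monotone class generated by finite unions of measurable rectangles. -/
inductive Good : Set (TalSpace × TalSpace) → Prop
  | basic (ι : Type) [Fintype ι] (s t : ι → Set TalSpace)
      (hs : ∀ i, MeasurableSet (s i)) (ht : ∀ i, MeasurableSet (t i)) :
      Good (⋃ i, s i ×ˢ t i)
  | mUnion (f : ℕ → Set (TalSpace × TalSpace)) (hf : Monotone f)
      (h : ∀ n, Good (f n)) : Good (⋃ n, f n)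
  | mInter (f : ℕ → Set (TalSpace × TalSpace)) (hf : Antitone f)
      (h : ∀ n, Good (f n)) : Good (⋂ n, f n)

theorem Good.measurableSet {A : Set (TalSpace × TalSpace)} (hA : Good A) :
    MeasurableSet A := by
  induction hA with
  | basic ι s t hs ht => exact MeasurableSet.iUnion fun i => (hs i).prod (ht i)
  | mUnion f hf h ih => exact MeasurableSet.iUnion ih
  | mInter f hf h ih => exact MeasurableSet.iInter ih

theorem Good.compl' {A : Set (TalSpace × TalSpace)} (hA : Good A) : Good Aᶜ := by
  induction hA with
  | basic ι s t hs ht =>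
    classical
    have key : (⋃ i, s i ×ˢ t i)ᶜ =
        ⋃ g : ι → Bool, (⋂ i, if g i then (Set.univ : Set TalSpace) else (s i)ᶜ) ×ˢ
          (⋂ i, if g i then (t i)ᶜ else (Set.univ : Set TalSpace)) := by
      ext ⟨x, y⟩
      simp only [Set.mem_compl_iff, Set.mem_iUnion, Set.mem_prod, Set.mem_iInter, not_exists]
      constructor
      · intro h
        refine ⟨fun i => decide (x ∈ s i), fun i => ?_, fun i => ?_⟩
        · by_cases hx : x ∈ s i <;> simp [hx]
        · by_cases hx : x ∈ s i <;> simp [hx]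
          intro hy
          exact h i ⟨hx, hy⟩
      · rintro ⟨g, h1, h2⟩ i ⟨hx, hy⟩
        have h1i := h1 i
        have h2i := h2 i
        by_cases hg : g i
        · simp [hg] at h2i; exact h2i hy
        · simp [hg] at h1i; exact h1i hx
    rw [key]
    exact Good.basic _ _ _
      (fun g => MeasurableSet.iInter fun i => by
        by_cases h : g i <;> simp [h, (hs i).compl])
      (fun g => MeasurableSet.iInter fun i => by
        by_cases h : g i <;> simp [h, (ht i).compl])
  | mUnion f hf h ih =>
    rw [Set.compl_iUnion]
    exact Good.mInter _ (fun m n hmn => Set.compl_subset_compl.2 (hf hmn)) ih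
  | mInter f hf h ih =>
    rw [Set.compl_iInter]
    exact Good.mUnion _ (fun m n hmn => Set.compl_subset_compl.2 (hf hmn)) ih

theorem good_union_basic {B : Set (TalSpace × TalSpace)} (hB : Good B) :
    ∀ (ι : Type) [Fintype ι] (s t : ι → Set TalSpace),
      (∀ i, MeasurableSet (s i)) → (∀ i, MeasurableSet (t i)) →
      Good ((⋃ i, s i ×ˢ t i) ∪ B) := by
  induction hB with
  | basic κ s' t' hs' ht' =>
    intro ι _ s t hs ht
    have key : (⋃ i, s i ×ˢ t i) ∪ (⋃ j, s' j ×ˢ t' j) =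
        ⋃ k : ι ⊕ κ, (Sum.elim s s' k) ×ˢ (Sum.elim t t' k) := by
      rw [Set.iUnion_sum]
      simp
    rw [key]
    exact Good.basic _ _ _ (fun k => by cases k <;> simp [hs, hs', ht, ht'])
      (fun k => by cases k <;> simp [hs, hs', ht, ht'])
  | mUnion f hf h ih =>
    intro ι _ s t hs ht
    rw [Set.union_iUnion]
    exact Good.mUnion _ (fun m n hmn => Set.union_subset_union_right _ (hf hmn))
      fun n => ih n ι s t hs ht
  | mInter f hf h ih =>
    intro ι _ s t hs ht
    rw [Set.union_iInter]
    exact Good.mInter _ (fun m n hmn => Set.union_subset_union_right _ (hf hmn))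
      fun n => ih n ι s t hs ht

theorem good_union {A B : Set (TalSpace × TalSpace)} (hA : Good A) (hB : Good B) :
    Good (A ∪ B) := by
  induction hA with
  | basic ι s t hs ht => exact good_union_basic hB ι s t hs ht
  | mUnion f hf h ih =>
    rw [Set.iUnion_union]
    exact Good.mUnion _ (fun m n hmn => Set.union_subset_union_left _ (hf hmn)) ih
  | mInter f hf h ih =>
    rw [Set.iInter_union]
    exact Good.mInter _ (fun m n hmn => Set.union_subset_union_left _ (hf hmn)) ih

theorem good_empty : Good (∅ : Set (TalSpace × TalSpace)) := by
  have : (∅ : Set (TalSpace × TalSpace)) = ⋃ i : PEmpty, (∅ : Set TalSpace) ×ˢ (∅ : Set TalSpace) := by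
    simp
  rw [this]
  exact Good.basic _ _ _ (fun i => i.elim) (fun i => i.elim)

theorem good_iUnion (f : ℕ → Set (TalSpace × TalSpace)) (h : ∀ n, Good (f n)) :
    Good (⋃ n, f n) := by
  have hacc : ∀ n, Good (Set.accumulate f n) := by
    intro n
    induction n with
    | zero => simpa [Set.accumulate] using h 0
    | succ n ih =>
      have : Set.accumulate f (n + 1) = Set.accumulate f n ∪ f (n + 1) := by
        ext x
        simp only [Set.mem_accumulate, Set.mem_union]
        constructor
        · rintro ⟨k, hk, hx⟩
          rcases Nat.lt_succ_iff_lt_or_eq.mp (Nat.lt_succ_of_le hk) with hk' | rfl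
          · exact Or.inl ⟨k, Nat.lt_succ_iff.mp hk', hx⟩
          · exact Or.inr hx
        · rintro (⟨k, hk, hx⟩ | hx)
          · exact ⟨k, hk.trans (Nat.le_succ n), hx⟩
          · exact ⟨n + 1, le_rfl, hx⟩
      rw [this]
      exact good_union ih (h (n + 1))
  rw [← Set.iUnion_accumulate]
  exact Good.mUnion _ Set.monotone_accumulate hacc

/-- The monotone class as a measurable-space structure. -/
def goodSpace : MeasurableSpace (TalSpace × TalSpace) where
  MeasurableSet' := Good
  measurableSet_empty := good_empty
  measurableSet_compl := fun _ hA => hA.compl'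
  measurableSet_iUnion := good_iUnion

theorem good_of_measurableSet {A : Set (TalSpace × TalSpace)} (hA : MeasurableSet A) :
    Good A := by
  have hle : (inferInstance : MeasurableSpace (TalSpace × TalSpace)) ≤ goodSpace := by
    rw [← generateFrom_prod]
    apply MeasurableSpace.generateFrom_le
    rintro _ ⟨s, hs, t, ht, rfl⟩
    show Good (s ×ˢ t)
    have : s ×ˢ t = ⋃ _ : PUnit, s ×ˢ t := (Set.iUnion_const _).symm
    rw [this]
    exact Good.basic _ _ _ (fun _ => hs) (fun _ => ht)
  exact hle A hA

end Statement4Aux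

open Statement4Aux in
/-- If `μ` is a Maharam submeasure on the Borel σ-algebra of
`𝒯 = ∏_{n∈ℕ}[2^n]`, then for every Borel `A ⊆ 𝒯 × 𝒯` the map `x ↦ μ (A_x)` is Borel
measurable; in particular `{x | μ (A_x) = 0}` is Borel. -/
theorem statement4 (μ : Set TalSpace → ℝ)
    (hzero : μ ∅ = 0)
    (hmono : ∀ A B : Set TalSpace, MeasurableSet A → MeasurableSet B → A ⊆ B → μ A ≤ μ B)
    (hsubadd : ∀ A B : Set TalSpace, MeasurableSet A → MeasurableSet B →
      μ (A ∪ B) ≤ μ A + μ B)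
    (hcont : ∀ A : ℕ → Set TalSpace, (∀ n, MeasurableSet (A n)) → Antitone A →
      (⋂ n, A n) = ∅ → Tendsto (fun n => μ (A n)) atTop (𝓝 0)) :
    ∀ A : Set (TalSpace × TalSpace), MeasurableSet A →
      Measurable (fun x : TalSpace => μ {y : TalSpace | (x, y) ∈ A}) ∧
      MeasurableSet {x : TalSpace | μ {y : TalSpace | (x, y) ∈ A} = 0} := by
  -- continuity from below
  have hbelow : ∀ C : ℕ → Set TalSpace, (∀ n, MeasurableSet (C n)) → Monotone C →
      Tendsto (fun n => μ (C n)) atTop (𝓝 (μ (⋃ n, C n))) := by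
    intro C hC hmonoC
    set U := ⋃ n, C n with hU
    have hUm : MeasurableSet U := MeasurableSet.iUnion hC
    set D := fun n => U \ C n with hD
    have hDm : ∀ n, MeasurableSet (D n) := fun n => hUm.diff (hC n)
    have hDanti : Antitone D := fun m n hmn => Set.diff_subset_diff_right (hmonoC hmn)
    have hDint : (⋂ n, D n) = ∅ := by
      rw [Set.eq_empty_iff_forall_notMem]
      intro x hx
      rcases Set.mem_iUnion.mp (Set.mem_iInter.mp hx 0).1 with ⟨n, hn⟩
      exact (Set.mem_iInter.mp hx n).2 hn
    have hD0 := hcont D hDm hDanti hDint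
    have hlow : ∀ n, μ U - μ (D n) ≤ μ (C n) := by
      intro n
      have hsub : U ⊆ C n ∪ D n := by
        intro x hx
        by_cases h : x ∈ C n
        · exact Or.inl h
        · exact Or.inr ⟨hx, h⟩
      have h1 : μ U ≤ μ (C n) + μ (D n) :=
        le_trans (hmono _ _ hUm ((hC n).union (hDm n)) hsub)
          (hsubadd _ _ (hC n) (hDm n))
      linarith
    have hhigh : ∀ n, μ (C n) ≤ μ U := fun n =>
      hmono _ _ (hC n) hUm (Set.subset_iUnion C n)
    have h1 : Tendsto (fun n => μ U - μ (D n)) atTop (𝓝 (μ U)) := by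
      have h2 := ((tendsto_const_nhds : Tendsto (fun _ : ℕ => μ U) atTop (𝓝 (μ U))).sub hD0)
      simpa using h2
    exact tendsto_of_tendsto_of_tendsto_of_le_of_le h1 tendsto_const_nhds hlow hhigh
  -- continuity from above
  have habove : ∀ C : ℕ → Set TalSpace, (∀ n, MeasurableSet (C n)) → Antitone C →
      Tendsto (fun n => μ (C n)) atTop (𝓝 (μ (⋂ n, C n))) := by
    intro C hC hantiC
    set I := ⋂ n, C n with hI
    have hIm : MeasurableSet I := MeasurableSet.iInter hC
    set D := fun n => C n \ I with hD
    have hDm : ∀ n, MeasurableSet (D n) := fun n => (hC n).diff hIm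
    have hDanti : Antitone D := fun m n hmn => Set.diff_subset_diff_left (hantiC hmn)
    have hDint : (⋂ n, D n) = ∅ := by
      rw [Set.eq_empty_iff_forall_notMem]
      intro x hx
      exact (Set.mem_iInter.mp hx 0).2
        (Set.mem_iInter.mpr fun n => (Set.mem_iInter.mp hx n).1)
    have hD0 := hcont D hDm hDanti hDint
    have hhigh : ∀ n, μ (C n) ≤ μ I + μ (D n) := by
      intro n
      have hsub : C n ⊆ I ∪ D n := by
        intro x hx
        by_cases h : x ∈ I
        · exact Or.inl h
        · exact Or.inr ⟨hx, h⟩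
      exact le_trans (hmono _ _ (hC n) (hIm.union (hDm n)) hsub)
        (hsubadd _ _ hIm (hDm n))
    have hlow : ∀ n, μ I ≤ μ (C n) := fun n =>
      hmono _ _ hIm (hC n) (Set.iInter_subset C n)
    have h1 : Tendsto (fun n => μ I + μ (D n)) atTop (𝓝 (μ I)) := by
      have h2 := ((tendsto_const_nhds : Tendsto (fun _ : ℕ => μ I) atTop (𝓝 (μ I))).add hD0)
      simpa using h2
    exact tendsto_of_tendsto_of_tendsto_of_le_of_le tendsto_const_nhds h1 hlow hhigh
  -- the main induction
  have main : ∀ A : Set (TalSpace × TalSpace), Good A →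
      Measurable (fun x : TalSpace => μ {y : TalSpace | (x, y) ∈ A}) := by
    intro A hA
    induction hA with
    | basic ι s t hs ht =>
      classical
      have hrepr : ∀ x : TalSpace, {y | (x, y) ∈ ⋃ i, s i ×ˢ t i} =
          ⋃ i, if x ∈ s i then t i else ∅ := by
        intro x
        ext y
        simp only [Set.mem_setOf_eq, Set.mem_iUnion, Set.mem_prod]
        constructor
        · rintro ⟨i, hx, hy⟩
          exact ⟨i, by simp [hx, hy]⟩
        · rintro ⟨i, hy⟩
          by_cases hx : x ∈ s i
          · simp only [hx, if_true] at hy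
            exact ⟨i, hx, hy⟩
          · simp [hx] at hy
      have hfact : (fun x => μ {y : TalSpace | (x, y) ∈ ⋃ i, s i ×ˢ t i}) =
          (fun p : ι → Bool => μ (⋃ i, if p i then t i else ∅)) ∘
            (fun x i => decide (x ∈ s i)) := by
        funext x
        simp only [Function.comp]
        rw [hrepr]
        congr 1
        exact Set.iUnion_congr fun i => by by_cases h : x ∈ s i <;> simp [h]
      rw [hfact]
      refine (measurable_of_countable _).comp (measurable_pi_lambda _ fun i => ?_)
      refine measurable_to_countable' fun b => ?_
      cases b
      · have : (fun x => decide (x ∈ s i)) ⁻¹' {false} = (s i)ᶜ := by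
          ext x; by_cases h : x ∈ s i <;> simp [h]
        rw [this]; exact (hs i).compl
      · have : (fun x => decide (x ∈ s i)) ⁻¹' {true} = s i := by
          ext x; by_cases h : x ∈ s i <;> simp [h]
        rw [this]; exact hs i
    | mUnion f hf h ih =>
      refine measurable_of_tendsto_metrizable' atTop ih (tendsto_pi_nhds.mpr fun x => ?_)
      have hsec : {y : TalSpace | (x, y) ∈ ⋃ n, f n} = ⋃ n, {y | (x, y) ∈ f n} := by
        ext y; simp
      rw [hsec]
      exact hbelow _ (fun n => measurable_prodMk_left (h n).measurableSet)
        (fun m n hmn y hy => hf hmn hy)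
    | mInter f hf h ih =>
      refine measurable_of_tendsto_metrizable' atTop ih (tendsto_pi_nhds.mpr fun x => ?_)
      have hsec : {y : TalSpace | (x, y) ∈ ⋂ n, f n} = ⋂ n, {y | (x, y) ∈ f n} := by
        ext y; simp
      rw [hsec]
      exact habove _ (fun n => measurable_prodMk_left (h n).measurableSet)
        (fun m n hmn y hy => hf hmn hy)
  intro A hA
  have hm := main A (good_of_measurableSet hA)
  exact ⟨hm, hm (measurableSet_singleton 0)⟩
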